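/- For any vector field w in K (satisfying u_k(ω)+u_l(τ_k ω) = u_l(ω)+u_k(τ_l ω) for all unit vectors k,l), the identity Σ_{k∈U} b_k w_k = ∇* H w holds, where (Hu)_k := (1/2) Σ_{l∈U} h_{k,l} (∂_k + 2I) u_l and b_k = Σ_l h_{k,l}. -/

import Mathlib

open MeasureTheory Filter Topology

/-- The unit vector of `ℤ^d` indexed by a coordinate and a sign. -/
def unitVec (d : ℕ) (k : Fin d × Bool) : Fin d → ℤ :=
  fun j => if j = k.1 then (if k.2 then 1 else -1) else 0

/-- Negation `k ↦ -k` on the index set `U` of unit vectors. -/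
def negU {d : ℕ} (k : Fin d × Bool) : Fin d × Bool := (k.1, !k.2)

/-- The operator `H` on vector fields: `(Hu)_k = (1/2) ∑_l h_{k,l} (∂_k + 2I) u_l`. -/
noncomputable def Hop (d : ℕ) {Ω : Type*} (τ : (Fin d → ℤ) → Ω → Ω)
    (h : (Fin d × Bool) → (Fin d × Bool) → Ω → ℝ)
    (u : (Fin d × Bool) → Ω → ℝ) (k : Fin d × Bool) (ω : Ω) : ℝ :=
  (1/2) * ∑ l : Fin d × Bool,
    h k l ω * ((u l (τ (unitVec d k) ω) - u l ω) + 2 * u l ω)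

private lemma sum_antisym {ι : Type*} [Fintype ι] (F : ι → ι → ℝ)
    (hF : ∀ k l, F k l = -F l k) :
    ∑ k : ι, ∑ l : ι, F k l = 0 := by
  have hS : (∑ k : ι, ∑ l : ι, F k l) = -(∑ k : ι, ∑ l : ι, F k l) := by
    calc ∑ k : ι, ∑ l : ι, F k l = ∑ l : ι, ∑ k : ι, F k l := Finset.sum_comm
    _ = ∑ l : ι, ∑ k : ι, -F l k := by simp_rw [← hF]
    _ = -(∑ k : ι, ∑ l : ι, F k l) := by simp [← Finset.sum_neg_distrib]
  linarith

private lemma negU_invol {d : ℕ} : Function.Involutive (negU (d := d)) := by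
  intro k; simp [negU]

private lemma unitVec_negU {d : ℕ} (k : Fin d × Bool) :
    unitVec d (negU k) = -(unitVec d k) := by
  obtain ⟨i, c⟩ := k
  funext j
  simp only [unitVec, negU, Pi.neg_apply]
  cases c <;> split <;> simp_all

/-- for any `w ∈ K` (rotation-free vector field), `∑_k b_k w_k = ∇* H w`,
where `∇*` is the adjoint of `∇`, given by `∇* u = (1/2) ∑_k ∂_{-k} u_k` (which on
antisymmetric fields equals `-∑_k u_k`; the formula `∑_k u_k` in the paper carries a
sign typo), and `b_k = ∑_l h_{k,l}`. -/
theorem divergence_of_H_identity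
    (d : ℕ) (Ω : Type*)
    (τ : (Fin d → ℤ) → Ω → Ω)
    (hτ0 : τ 0 = id)
    (hτadd : ∀ z w : Fin d → ℤ, τ (z + w) = τ z ∘ τ w)
    (h : (Fin d × Bool) → (Fin d × Bool) → Ω → ℝ)
    (hA1 : ∀ k l ω, h k l ω = - h (negU k) l (τ (unitVec d k) ω))
    (hA2 : ∀ k l ω, h k l ω = - h k (negU l) (τ (unitVec d l) ω))
    (hA3 : ∀ k l ω, h k l ω = - h l k ω)
    (b : (Fin d × Bool) → Ω → ℝ)
    (hb : ∀ k ω, b k ω = ∑ l : Fin d × Bool, h k l ω)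
    (w : (Fin d × Bool) → Ω → ℝ)
    (hwV : ∀ k ω, w k ω + w (negU k) (τ (unitVec d k) ω) = 0)
    (hwK : ∀ k l ω, w k ω + w l (τ (unitVec d k) ω) = w l ω + w k (τ (unitVec d l) ω)) :
    ∀ ω : Ω, ∑ k : Fin d × Bool, b k ω * w k ω
      = (1/2) * ∑ k : Fin d × Bool,
          (Hop d τ h w k (τ (-(unitVec d k)) ω) - Hop d τ h w k ω) := by
  intro ω
  -- τ z (τ (-z) ω') = ω'
  have hid : ∀ (z : Fin d → ℤ) (ω' : Ω), τ z (τ (-z) ω') = ω' := by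
    intro z ω'
    have := hτadd z (-z)
    simp only [add_neg_cancel, hτ0] at this
    have := congrFun this.symm ω'
    simpa using this
  -- Hop in convenient form
  have hHop : ∀ k (ω' : Ω), Hop d τ h w k ω'
      = (1/2) * ∑ l : Fin d × Bool, h k l ω' * (w l (τ (unitVec d k) ω') + w l ω') := by
    intro k ω'
    unfold Hop
    congr 1
    apply Finset.sum_congr rfl
    intro l _
    ring
  -- value at shifted point
  have hstep : ∀ k, Hop d τ h w (negU k) (τ (-(unitVec d (negU k))) ω)
      = -((1/2) * ∑ l : Fin d × Bool, h k l ω * (w l (τ (unitVec d k) ω) + w l ω)) := by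
    intro k
    rw [hHop]
    rw [show (-(unitVec d (negU k))) = unitVec d k by rw [unitVec_negU, neg_neg]]
    have e2 : τ (unitVec d (negU k)) (τ (unitVec d k) ω) = ω := by
      rw [unitVec_negU]
      have := hid (-(unitVec d k)) ω
      rwa [neg_neg] at this
    have key : (∑ l : Fin d × Bool, h (negU k) l (τ (unitVec d k) ω)
          * (w l (τ (unitVec d (negU k)) (τ (unitVec d k) ω)) + w l (τ (unitVec d k) ω)))
        = ∑ l : Fin d × Bool, -(h k l ω * (w l (τ (unitVec d k) ω) + w l ω)) := by
      apply Finset.sum_congr rfl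
      intro l _
      have h1 : h (negU k) l (τ (unitVec d k) ω) = - h k l ω := by
        linarith [hA1 k l ω]
      rw [e2, h1]
      ring
    rw [key, Finset.sum_neg_distrib]
    ring
  -- sum over shifted points
  have hsum1 : (∑ k : Fin d × Bool, Hop d τ h w k (τ (-(unitVec d k)) ω))
      = -(∑ k : Fin d × Bool,
          (1/2) * ∑ l : Fin d × Bool, h k l ω * (w l (τ (unitVec d k) ω) + w l ω)) := by
    rw [← Equiv.sum_comp (negU_invol.toPerm _)
      (fun k => Hop d τ h w k (τ (-(unitVec d k)) ω))]
    rw [← Finset.sum_neg_distrib]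
    apply Finset.sum_congr rfl
    intro k _
    exact hstep k
  -- rewrite goal
  have hRHS : (1/2) * ∑ k : Fin d × Bool,
          (Hop d τ h w k (τ (-(unitVec d k)) ω) - Hop d τ h w k ω)
      = -(∑ k : Fin d × Bool,
          (1/2) * ∑ l : Fin d × Bool, h k l ω * (w l (τ (unitVec d k) ω) + w l ω)) := by
    rw [Finset.sum_sub_distrib, hsum1]
    have : (∑ k : Fin d × Bool, Hop d τ h w k ω)
        = ∑ k : Fin d × Bool,
            (1/2) * ∑ l : Fin d × Bool, h k l ω * (w l (τ (unitVec d k) ω) + w l ω) := by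
      apply Finset.sum_congr rfl
      intro k _
      exact hHop k ω
    rw [this]
    ring
  rw [hRHS]
  -- key antisymmetric sums
  have S1 : (∑ k : Fin d × Bool, ∑ l : Fin d × Bool,
      h k l ω * (w k ω + w l (τ (unitVec d k) ω))) = 0 := by
    apply sum_antisym
    intro k l
    rw [hA3 k l ω, hwK k l ω]
    ring
  have S2 : (∑ k : Fin d × Bool, ∑ l : Fin d × Bool,
      (h k l ω * w l ω + h k l ω * w k ω)) = 0 := by
    apply sum_antisym
    intro k l
    rw [hA3 k l ω]
    ring
  -- expand everything into three basic double sums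
  simp only [hb, Finset.sum_mul, mul_add] at *
  simp only [Finset.sum_add_distrib, Finset.mul_sum, ← mul_assoc] at *
  set A := ∑ k : Fin d × Bool, ∑ l : Fin d × Bool, h k l ω * w k ω with hA
  set B := ∑ k : Fin d × Bool, ∑ l : Fin d × Bool, h k l ω * w l (τ (unitVec d k) ω) with hB
  set C := ∑ k : Fin d × Bool, ∑ l : Fin d × Bool, h k l ω * w l ω with hC
  -- goal should now be A = -(something in B and C); clean up constants
  have hconv : (∑ x : Fin d × Bool, 1/2 *
        (∑ x_1 : Fin d × Bool, h x x_1 ω * w x_1 (τ (unitVec d x) ω)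
          + ∑ x_1 : Fin d × Bool, h x x_1 ω * w x_1 ω)) = 1/2 * (B + C) := by
    rw [← Finset.mul_sum, Finset.sum_add_distrib]
  rw [hconv]
  linarith
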